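/- Let z_1, ..., z_n be vectors in ℝ^p and let γ ∈ ℝ^p satisfy 1 + γᵀz_i > 0 for every i and Σ_{i=1}^n z_i / (1 + γᵀz_i) = 0. Define w*_i = 1 / (n(1 + γᵀz_i)). Then for every vector of weights (w_1, ..., w_n) with w_i ≥ 0, Σ_{i=1}^n w_i = 1 and Σ_{i=1}^n w_i z_i = 0, one has Σ_{i=1}^n log(n w_i) ≤ Σ_{i=1}^n log(n w*_i) = − Σ_{i=1}^n log(1 + γᵀz_i) (with log(n w_i) interpreted as −∞ when w_i = 0). Consequently the supremum defining the profile empirical log-likelihood equals −n log n − Σ_{i=1}^n log(1 + γᵀz_i). -/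

import Mathlib

open scoped BigOperators

/-- Extended-real logarithm: `log t`, interpreted as `⊥` (i.e. −∞) when `t = 0`. -/
noncomputable def elog (t : ℝ) : EReal := if t = 0 then ⊥ else ((Real.log t : ℝ) : EReal)

lemma elog_of_pos {t : ℝ} (ht : 0 < t) : elog t = ((Real.log t : ℝ) : EReal) := by
  simp [elog, ht.ne']

lemma ereal_coe_sum {α : Type*} (s : Finset α) (f : α → ℝ) :
    ((∑ i ∈ s, f i : ℝ) : EReal) = ∑ i ∈ s, ((f i : ℝ) : EReal) :=
  map_sum (⟨⟨Real.toEReal, EReal.coe_zero⟩, EReal.coe_add⟩ : ℝ →+ EReal) f s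

lemma ereal_sum_eq_bot {n : ℕ} (a : Fin n → EReal) (i : Fin n) (h : a i = ⊥) :
    ∑ k, a k = ⊥ := by
  classical
  rw [← Finset.add_sum_erase _ a (Finset.mem_univ i), h, EReal.bot_add]

/-- The weights w*_i = 1/(n(1+γᵀz_i)) maximize Σ log(n w_i) over all probability
vectors w with Σ w_i z_i = 0, the maximal value is −Σ log(1+γᵀz_i), and consequently
the supremum defining the profile empirical log-likelihood (over Σ log w_i) equals
−n log n − Σ log(1+γᵀz_i). -/
theorem el_weights_optimal
    (n p : ℕ) (hn : 0 < n) (z : Fin n → (Fin p → ℝ)) (γ : Fin p → ℝ)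
    (hpos : ∀ i, 0 < 1 + ∑ j, γ j * z i j)
    (hlag : ∑ i, (1 + ∑ j, γ j * z i j)⁻¹ • z i = 0)
    (wstar : Fin n → ℝ)
    (hwstar : ∀ i, wstar i = 1 / (n * (1 + ∑ j, γ j * z i j))) :
    (∀ w : Fin n → ℝ, (∀ i, 0 ≤ w i) → ∑ i, w i = 1 → ∑ i, w i • z i = 0 →
        ∑ i, elog ((n : ℝ) * w i) ≤ ∑ i, elog ((n : ℝ) * wstar i))
    ∧ ∑ i, elog ((n : ℝ) * wstar i)
        = ((-∑ i, Real.log (1 + ∑ j, γ j * z i j) : ℝ) : EReal)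
    ∧ sSup {L : EReal | ∃ w : Fin n → ℝ, (∀ i, 0 ≤ w i) ∧ ∑ i, w i = 1 ∧
          ∑ i, w i • z i = 0 ∧ L = ∑ i, elog (w i)}
        = ((-(n * Real.log n) - ∑ i, Real.log (1 + ∑ j, γ j * z i j) : ℝ) : EReal) := by
  classical
  set T : Fin n → ℝ := fun i => 1 + ∑ j, γ j * z i j with hT
  have hn' : (n : ℝ) ≠ 0 := Nat.cast_ne_zero.mpr hn.ne'
  have hTpos : ∀ i, 0 < T i := hpos
  have hTne : ∀ i, T i ≠ 0 := fun i => (hTpos i).ne'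
  -- generic identity: if ∑ v i • z i = 0 then ∑ v i * T i = ∑ v i
  have key : ∀ v : Fin n → ℝ, (∑ i, v i • z i = 0) → ∑ i, v i * T i = ∑ i, v i := by
    intro v hv
    have hj : ∀ j, ∑ i, v i * z i j = 0 := by
      intro j
      have := congrFun hv j
      simpa [Finset.sum_apply] using this
    calc ∑ i, v i * T i = ∑ i, (v i + ∑ j, γ j * (v i * z i j)) := by
          refine Finset.sum_congr rfl fun i _ => ?_
          rw [hT, mul_add, mul_one, Finset.mul_sum]
          congr 1
          exact Finset.sum_congr rfl fun j _ => by ring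
      _ = ∑ i, v i + ∑ i, ∑ j, γ j * (v i * z i j) := Finset.sum_add_distrib
      _ = ∑ i, v i + ∑ j, γ j * ∑ i, v i * z i j := by
          rw [Finset.sum_comm]
          congr 1
          exact Finset.sum_congr rfl fun j _ => by rw [Finset.mul_sum]
      _ = ∑ i, v i := by simp [hj]
  -- facts about wstar
  have hnw : ∀ i, (n : ℝ) * wstar i = (T i)⁻¹ := by
    intro i
    have hTe : T i = 1 + ∑ j, γ j * z i j := rfl
    rw [hwstar i, ← hTe, one_div, mul_inv, ← mul_assoc, mul_inv_cancel₀ hn', one_mul]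
  have hnpos : (0:ℝ) < (n:ℝ) := by exact_mod_cast hn
  have hwpos : ∀ i, 0 < wstar i := by
    intro i
    rw [hwstar i]
    exact div_pos one_pos (mul_pos hnpos (hpos i))
  have hinvz : ∑ i, (T i)⁻¹ • z i = 0 := hlag
  have hinvsum : ∑ i, (T i)⁻¹ = (n : ℝ) := by
    have h1 := key (fun i => (T i)⁻¹) hinvz
    have h2 : ∑ i, (T i)⁻¹ * T i = (n : ℝ) := by
      rw [Finset.sum_congr rfl fun i _ => inv_mul_cancel₀ (hTne i)]
      simp
    rw [h1] at h2
    exact h2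
  have hwsum : ∑ i, wstar i = 1 := by
    have : ∑ i, wstar i = (n : ℝ)⁻¹ * ∑ i, (T i)⁻¹ := by
      rw [Finset.mul_sum]
      refine Finset.sum_congr rfl fun i _ => ?_
      rw [hwstar i]
      field_simp
      rfl
    rw [this, hinvsum, inv_mul_cancel₀ hn']
  have hwz : ∑ i, wstar i • z i = 0 := by
    have : ∀ i, wstar i • z i = (n : ℝ)⁻¹ • ((T i)⁻¹ • z i) := by
      intro i
      rw [smul_smul, hwstar i]
      congr 1
      field_simp
      rfl
    rw [Finset.sum_congr rfl fun i _ => this i, ← Finset.smul_sum, hinvz, smul_zero]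
  -- Part 2
  have part2 : ∑ i, elog ((n : ℝ) * wstar i)
      = ((-∑ i, Real.log (T i) : ℝ) : EReal) := by
    have : ∀ i, elog ((n : ℝ) * wstar i) = ((-(Real.log (T i)) : ℝ) : EReal) := by
      intro i
      rw [elog_of_pos (by have := hwpos i; positivity), hnw i, Real.log_inv]
    rw [Finset.sum_congr rfl fun i _ => this i, ← ereal_coe_sum]
    norm_num
  -- Part 1
  have part1 : ∀ w : Fin n → ℝ, (∀ i, 0 ≤ w i) → ∑ i, w i = 1 → ∑ i, w i • z i = 0 →
      ∑ i, elog ((n : ℝ) * w i) ≤ ∑ i, elog ((n : ℝ) * wstar i) := by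
    intro w hw0 hw1 hwz'
    by_cases hzero : ∃ i, w i = 0
    · obtain ⟨i, hi⟩ := hzero
      have hb : elog ((n : ℝ) * w i) = ⊥ := by simp [elog, hi]
      rw [ereal_sum_eq_bot _ i hb]
      exact bot_le
    · push_neg at hzero
      have hwpos' : ∀ i, 0 < w i := fun i => lt_of_le_of_ne (hw0 i) (Ne.symm (hzero i))
      have hL : ∀ i, elog ((n : ℝ) * w i) = ((Real.log ((n : ℝ) * w i) : ℝ) : EReal) :=
        fun i => elog_of_pos (by have := hwpos' i; positivity)
      rw [Finset.sum_congr rfl fun i _ => hL i, part2, ← ereal_coe_sum,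
        EReal.coe_le_coe_iff]
      -- real inequality
      have hterm : ∀ i, Real.log ((n : ℝ) * w i)
          ≤ -(Real.log (T i)) + ((n : ℝ) * w i * T i - 1) := by
        intro i
        have hprod : 0 < (n : ℝ) * w i * T i :=
          mul_pos (mul_pos hnpos (hwpos' i)) (hTpos i)
        have h1 : Real.log ((n : ℝ) * w i * T i)
            = Real.log ((n : ℝ) * w i) + Real.log (T i) :=
          Real.log_mul (ne_of_gt (mul_pos hnpos (hwpos' i))) (hTne i)
        have h2 := Real.log_le_sub_one_of_pos hprod
        linarith
      calc ∑ i, Real.log ((n : ℝ) * w i)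
          ≤ ∑ i, (-(Real.log (T i)) + ((n : ℝ) * w i * T i - 1)) :=
            Finset.sum_le_sum fun i _ => hterm i
        _ = -∑ i, Real.log (T i) + ((n : ℝ) * ∑ i, w i * T i - n) := by
            rw [Finset.sum_add_distrib, Finset.sum_neg_distrib]
            congr 1
            rw [Finset.sum_sub_distrib, Finset.mul_sum]
            simp [mul_assoc]
        _ = -∑ i, Real.log (T i) := by
            rw [key w hwz', hw1]
            simp
  refine ⟨part1, part2, ?_⟩
  -- Part 3
  refine le_antisymm (sSup_le ?_) (le_sSup ?_)
  · rintro L ⟨w, hw0, hw1, hwz', rfl⟩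
    have hdecomp : ∀ i, elog (w i) = elog ((n : ℝ) * w i) + ((-(Real.log n) : ℝ) : EReal) := by
      intro i
      by_cases hi : w i = 0
      · simp [elog, hi, EReal.bot_add]
      · have hwi : 0 < w i := lt_of_le_of_ne (hw0 i) (Ne.symm hi)
        rw [elog_of_pos hwi, elog_of_pos (by positivity), ← EReal.coe_add]
        norm_cast
        rw [Real.log_mul hn' hi]
        ring
    calc ∑ i, elog (w i)
        = ∑ i, elog ((n : ℝ) * w i) + ∑ _i : Fin n, ((-(Real.log n) : ℝ) : EReal) := by
          rw [← Finset.sum_add_distrib]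
          exact Finset.sum_congr rfl fun i _ => hdecomp i
      _ ≤ ((-∑ i, Real.log (T i) : ℝ) : EReal) + ∑ _i : Fin n, ((-(Real.log n) : ℝ) : EReal) := by
          refine add_le_add_left ?_ _
          rw [← part2]
          exact part1 w hw0 hw1 hwz'
      _ = ((-(n * Real.log n) - ∑ i, Real.log (T i) : ℝ) : EReal) := by
          rw [← ereal_coe_sum, ← EReal.coe_add]
          norm_cast
          simp [Finset.sum_const]
          ring
  · refine ⟨wstar, fun i => (hwpos i).le, hwsum, hwz, ?_⟩
    have : ∀ i, elog (wstar i) = ((-(Real.log n) - Real.log (T i) : ℝ) : EReal) := by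
      intro i
      rw [elog_of_pos (hwpos i), hwstar i]
      congr 1
      rw [one_div, Real.log_inv, Real.log_mul hn' (hTne i)]
      ring
    rw [Finset.sum_congr rfl fun i _ => this i, ← ereal_coe_sum]
    norm_cast
    rw [Finset.sum_sub_distrib]
    simp [Finset.sum_const]
    try ring
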